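/- Let f : [0,∞) → [0,∞) satisfy f(0) = 0, sup_{z>0} f(z)/z < ∞, and limsup_{z→∞} f(z)/z = 0. Then there exists a continuous, strictly monotonically increasing function F : [0,∞) → [0,∞) such that: (1) F(z) ≥ f(z) for all z ≥ 0; (2) F(0) = 0 and F(z) → ∞ as z → ∞; (3) limsup_{z→∞} F(z)/z = 0. Moreover the inverse F⁻¹ : [0,∞) → [0,∞) can be written as F⁻¹(y) = σ(√y)·y where (4) σ : [0,∞) → [0,∞) is continuous and y ↦ σ(√y) is monotonically increasing; (5) there exists σ₀ > 0 with σ(√y) ≥ σ₀ for all y ≥ 0; and (6) σ(√y) → ∞ as y → ∞. -/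
import Mathlib


open Set Filter Topology

/-- Sliding-average minorant of a monotone function: continuity, monotonicity,
and two-sided bounds. -/
private lemma slide_props (u : ℝ → ℝ) (hu : Monotone u) :
    Continuous (fun y => ∫ t in (y-1)..y, u t) ∧
    Monotone (fun y => ∫ t in (y-1)..y, u t) ∧
    (∀ y, u (y-1) ≤ ∫ t in (y-1)..y, u t) ∧
    (∀ y, (∫ t in (y-1)..y, u t) ≤ u y) := by
  have hint : ∀ a b : ℝ, IntervalIntegrable u MeasureTheory.volume a b :=
    fun a b => (hu.monotoneOn _).intervalIntegrable
  refine ⟨?_, ?_, ?_, ?_⟩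
  · have h1 : Continuous fun y : ℝ => ∫ t in (0:ℝ)..y, u t :=
      intervalIntegral.continuous_primitive hint 0
    have heq : ∀ y : ℝ, (∫ t in (y-1)..y, u t)
        = (∫ t in (0:ℝ)..y, u t) - ∫ t in (0:ℝ)..(y-1), u t := by
      intro y
      rw [intervalIntegral.integral_interval_sub_left (hint 0 y) (hint 0 (y-1))]
    simp only [heq]
    exact h1.sub (h1.comp (continuous_id.sub continuous_const))
  · intro a b hab
    have hd : 0 ≤ b - a := sub_nonneg.2 hab
    have hshift : (∫ t in (b-1)..b, u t) = ∫ t in (a-1)..a, u (t + (b - a)) := by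
      rw [intervalIntegral.integral_comp_add_right u (b - a)]
      congr 1 <;> ring
    show (∫ t in (a-1)..a, u t) ≤ ∫ t in (b-1)..b, u t
    rw [hshift]
    refine intervalIntegral.integral_mono_on (by linarith) (hint _ _) ?_ ?_
    · exact ((hu.comp (monotone_id.add_const (b-a))).monotoneOn _).intervalIntegrable
    · intro x _
      exact hu (le_add_of_nonneg_right hd)
  · intro y
    have := intervalIntegral.integral_mono_on (f := fun _ => u (y-1)) (g := u)
      (by linarith : y - 1 ≤ y) intervalIntegrable_const (hint _ _)
      (fun x hx => hu hx.1)
    simpa using this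
  · intro y
    have := intervalIntegral.integral_mono_on (f := u) (g := fun _ => u y)
      (by linarith : y - 1 ≤ y) (hint _ _) intervalIntegrable_const
      (fun x hx => hu hx.2)
    simpa using this

/-- Every nonnegative `f : [0,∞) → [0,∞)` with `f(0) = 0`,
`sup_{z>0} f(z)/z < ∞` and `limsup_{z→∞} f(z)/z = 0` admits a continuous, strictly
increasing, sublinear majorant `F` with `F(0) = 0`, `F(z) → ∞`, whose inverse has the
representation `F⁻¹(y) = σ(√y)·y` with `σ` continuous, `y ↦ σ(√y)` monotone increasing,
bounded below by some `σ₀ > 0`, and tending to `∞`. -/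
theorem stmt6 (f : ℝ → ℝ)
    (hf0 : f 0 = 0)
    (hfnn : ∀ z, 0 ≤ z → 0 ≤ f z)
    (hbdd : ∃ M : ℝ, ∀ z, 0 < z → f z / z ≤ M)
    (hsub : Filter.limsup (fun z => f z / z) atTop = 0) :
    ∃ F σ : ℝ → ℝ, ∃ σ₀ : ℝ,
      -- F : [0,∞) → [0,∞) continuous and strictly increasing
      ContinuousOn F (Set.Ici 0) ∧ StrictMonoOn F (Set.Ici 0) ∧
      (∀ z, 0 ≤ z → 0 ≤ F z) ∧
      -- (1) F dominates f
      (∀ z, 0 ≤ z → f z ≤ F z) ∧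
      -- (2) F(0) = 0 and F(z) → ∞ as z → ∞
      F 0 = 0 ∧ Tendsto F atTop atTop ∧
      -- (3) F is sublinear at infinity
      Filter.limsup (fun z => F z / z) atTop = 0 ∧
      -- σ : [0,∞) → [0,∞), and F⁻¹(y) = σ(√y)·y, i.e. F(σ(√y)·y) = y for y ≥ 0
      ContinuousOn σ (Set.Ici 0) ∧ (∀ s, 0 ≤ s → 0 ≤ σ s) ∧
      (∀ y, 0 ≤ y → F (σ (Real.sqrt y) * y) = y) ∧
      -- (4) y ↦ σ(√y) is monotonically increasing
      MonotoneOn (fun y => σ (Real.sqrt y)) (Set.Ici 0) ∧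
      -- (5) uniform positive lower bound
      0 < σ₀ ∧ (∀ y, 0 ≤ y → σ₀ ≤ σ (Real.sqrt y)) ∧
      -- (6) σ(√y) → ∞ as y → ∞
      Tendsto (fun y => σ (Real.sqrt y)) atTop atTop := by
  obtain ⟨M₀, hM₀⟩ := hbdd
  set M : ℝ := max M₀ 1 with hM_def
  have hM1 : (1:ℝ) ≤ M := le_max_right _ _
  have hM0 : (0:ℝ) < M := lt_of_lt_of_le one_pos hM1
  have hfM : ∀ z, 0 < z → f z / z ≤ M := fun z hz => (hM₀ z hz).trans (le_max_left _ _)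
  have hfMz : ∀ z, 0 ≤ z → f z ≤ M * z := by
    intro z hz
    rcases eq_or_lt_of_le hz with h | h
    · simp [← h, hf0]
    · have := hfM z h
      rw [div_le_iff₀ h] at this
      linarith [this]
  -- the tail-sup function H
  set H : ℝ → ℝ := fun t => sSup ((fun w => f w / w) '' Ici (max t 1)) with hH_def
  have himg_ne : ∀ t : ℝ, ((fun w => f w / w) '' Ici (max t 1)).Nonempty :=
    fun t => ⟨_, mem_image_of_mem _ (self_mem_Ici)⟩
  have himg_bdd : ∀ t : ℝ, ∀ x ∈ (fun w => f w / w) '' Ici (max t 1), x ≤ M := by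
    rintro t x ⟨w, hw, rfl⟩
    exact hfM w (lt_of_lt_of_le one_pos ((le_max_right t 1).trans hw))
  have hH_leM : ∀ t, H t ≤ M := fun t => csSup_le (himg_ne t) (himg_bdd t)
  have hH_ge : ∀ t w, max t 1 ≤ w → f w / w ≤ H t := by
    intro t w hw
    exact le_csSup ⟨M, fun x hx => himg_bdd t x hx⟩ (mem_image_of_mem _ hw)
  have hH_anti : Antitone H := by
    intro t₁ t₂ h
    refine csSup_le (himg_ne t₂) ?_
    rintro x ⟨w, hw, rfl⟩
    exact hH_ge t₁ w (le_trans (max_le_max_right 1 h) hw)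
  -- tail bound from the limsup hypothesis
  have hlim : ∀ ε : ℝ, 0 < ε → ∃ Z : ℝ, ∀ w, Z ≤ w → f w / w < ε := by
    intro ε hε
    have hbd : IsBoundedUnder (· ≤ ·) atTop (fun z => f z / z) := by
      refine ⟨M, eventually_map.mpr ?_⟩
      filter_upwards [eventually_gt_atTop 0] with z hz using hfM z hz
    have := Filter.eventually_lt_of_limsup_lt (by rw [hsub]; exact hε) hbd
    exact eventually_atTop.mp this
  have hH_tends : Tendsto H atTop (𝓝 0) := by
    rw [tendsto_order]
    constructor
    · intro b hb
      filter_upwards with t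
      refine lt_of_lt_of_le hb ?_
      have h1 : (0:ℝ) < max t 1 := lt_of_lt_of_le one_pos (le_max_right _ _)
      calc (0:ℝ) ≤ f (max t 1) / max t 1 := div_nonneg (hfnn _ h1.le) h1.le
        _ ≤ H t := hH_ge t _ le_rfl
    · intro b hb
      obtain ⟨Z, hZ⟩ := hlim (b/2) (by linarith)
      filter_upwards [eventually_ge_atTop Z] with t ht
      have : H t ≤ b/2 := by
        refine csSup_le (himg_ne t) ?_
        rintro x ⟨w, hw, rfl⟩
        exact (hZ w (ht.trans ((le_max_left t 1).trans hw))).le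
      linarith
  -- the antitone control function g
  set g : ℝ → ℝ := fun t => max (H t) (M / max t 1) with hg_def
  have hg_pos : ∀ t, 0 < g t := fun t =>
    lt_of_lt_of_le (div_pos hM0 (lt_of_lt_of_le one_pos (le_max_right _ _))) (le_max_right _ _)
  have hg_leM : ∀ t, g t ≤ M := by
    intro t
    refine max_le (hH_leM t) ?_
    exact div_le_self hM0.le (le_max_right _ _)
  have hg_anti : Antitone g := by
    intro t₁ t₂ h
    refine max_le_max (hH_anti h) ?_
    exact div_le_div_of_nonneg_left hM0.le
      (lt_of_lt_of_le one_pos (le_max_right _ _)) (max_le_max_right 1 h)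
  have hg_tends : Tendsto g atTop (𝓝 0) := by
    have h2 : Tendsto (fun t : ℝ => M / max t 1) atTop (𝓝 0) := by
      apply Tendsto.div_atTop (tendsto_const_nhds)
      exact tendsto_atTop_mono (fun t => le_max_left t 1) tendsto_id
    simpa using hH_tends.max h2
  -- key inequality
  have hkey : ∀ z, 0 < z → f z / z ≤ g (f z / M) := by
    intro z hz
    have hfz : 0 ≤ f z := hfnn z hz.le
    have htz : f z / M ≤ z := by
      rw [div_le_iff₀ hM0]
      rw [mul_comm]
      exact hfMz z hz.le
    rcases le_or_gt 1 z with h1 | h1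
    · refine le_trans (hH_ge (f z / M) z (max_le htz h1)) (le_max_left _ _)
    · have hmax : max (f z / M) 1 = 1 := max_eq_right (by linarith)
      refine le_trans ?_ (le_max_right _ _)
      rw [hmax, div_one]
      calc f z / z ≤ M * z / z := by
            exact (div_le_div_iff_of_pos_right hz).mpr (hfMz z hz.le)
        _ = M * (z / z) := by ring
        _ = M := by rw [div_self hz.ne', mul_one]
  -- u and its sliding average v
  set u : ℝ → ℝ := fun t => (g t)⁻¹ with hu_def
  have hu_mono : Monotone u := by
    intro t₁ t₂ h
    exact inv_anti₀ (hg_pos t₂) (hg_anti h)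
  have hu_lb : ∀ t, M⁻¹ ≤ u t := fun t => inv_anti₀ (hg_pos t) (hg_leM t)
  have hu_tends : Tendsto u atTop atTop := by
    apply tendsto_inv_nhdsGT_zero.comp
    exact tendsto_nhdsWithin_of_tendsto_nhds_of_eventually_within _ hg_tends
      (Eventually.of_forall (fun t => hg_pos t))
  obtain ⟨hv_cont, hv_mono, hv_lb, hv_ub⟩ := slide_props u hu_mono
  set v : ℝ → ℝ := fun y => ∫ t in (y-1)..y, u t with hv_def
  have hv_lb' : ∀ y, M⁻¹ ≤ v y := fun y => (hu_lb (y-1)).trans (hv_lb y)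
  have hv_pos : ∀ y, 0 < v y := fun y => lt_of_lt_of_le (inv_pos.2 hM0) (hv_lb' y)
  have hv_tendsTop : Tendsto v atTop atTop := by
    refine tendsto_atTop_mono hv_lb ?_
    exact hu_tends.comp (tendsto_atTop_add_const_right _ (-1) tendsto_id |>.congr
      (fun y => by simp [sub_eq_add_neg, add_comm]))
  -- Φ and the order isomorphism
  set Φ : ℝ → ℝ := fun y => v (max y 0 / M) * y with hΦ_def
  have hΦ0 : Φ 0 = 0 := by simp [hΦ_def]
  have hΦ_eq : ∀ y : ℝ, 0 ≤ y → Φ y = v (y / M) * y := by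
    intro y hy
    simp [hΦ_def, max_eq_left hy]
  have hΦ_mono : StrictMono Φ := by
    intro a b hab
    rcases le_or_gt b 0 with hb | hb
    · have ha : a ≤ 0 := hab.le.trans hb
      simp only [hΦ_def, max_eq_right hb, max_eq_right ha]
      exact mul_lt_mul_of_pos_left hab (hv_pos _)
    · rcases le_or_gt a 0 with ha | ha
      · have h1 : Φ a ≤ 0 := by
          simp only [hΦ_def]
          exact mul_nonpos_of_nonneg_of_nonpos (hv_pos _).le ha
        have h2 : 0 < Φ b := by
          simp only [hΦ_def]
          exact mul_pos (hv_pos _) hb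
        linarith
      · simp only [hΦ_def, max_eq_left ha.le, max_eq_left (ha.trans hab).le]
        calc v (a / M) * a ≤ v (b / M) * a :=
              mul_le_mul_of_nonneg_right
                (hv_mono ((div_le_div_iff_of_pos_right hM0).mpr hab.le)) ha.le
          _ < v (b / M) * b := mul_lt_mul_of_pos_left hab (hv_pos _)
  have hΦ_cont : Continuous Φ := by
    apply Continuous.mul _ continuous_id
    exact hv_cont.comp ((continuous_id.max continuous_const).div_const M)
  have hΦ_top : Tendsto Φ atTop atTop := by
    have hbase : Tendsto (fun y : ℝ => M⁻¹ * y) atTop atTop :=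
      Tendsto.const_mul_atTop (inv_pos.2 hM0) tendsto_id
    refine tendsto_atTop_mono' atTop ?_ hbase
    filter_upwards [eventually_ge_atTop (0:ℝ)] with y hy
    calc M⁻¹ * y ≤ v (max y 0 / M) * y :=
      mul_le_mul_of_nonneg_right (hv_lb' _) hy
    _ = Φ y := rfl
  have hΦ_bot : Tendsto Φ atBot atBot := by
    have : Tendsto (fun y : ℝ => v (0 / M) * y) atBot atBot :=
      Tendsto.const_mul_atBot (hv_pos _) tendsto_id
    refine this.congr' ?_
    filter_upwards [eventually_le_atBot (0:ℝ)] with y hy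
    simp [hΦ_def, max_eq_right hy]
  have hΦ_surj : Function.Surjective Φ := hΦ_cont.surjective hΦ_top hΦ_bot
  set E : ℝ ≃o ℝ := StrictMono.orderIsoOfSurjective Φ hΦ_mono hΦ_surj with hE_def
  have hE_apply : ∀ y, E y = Φ y := fun y => rfl
  set F : ℝ → ℝ := fun z => E.symm z with hF_def
  have hFΦ : ∀ y, F (Φ y) = y := fun y => E.symm_apply_apply y
  have hΦF : ∀ z, Φ (F z) = z := fun z => E.apply_symm_apply z
  have hF_mono : StrictMono F := E.symm.strictMono
  have hF_cont : Continuous F := E.symm.continuous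
  have hF0 : F 0 = 0 := by have := hFΦ 0; rwa [hΦ0] at this
  have hF_nonneg : ∀ z, 0 ≤ z → 0 ≤ F z := by
    intro z hz
    rw [← hF0]
    exact hF_mono.monotone hz
  have hF_top : Tendsto F atTop atTop := E.symm.tendsto_atTop
  -- σ
  set σ : ℝ → ℝ := fun s => v (s ^ 2 / M) with hσ_def
  have hσ_sqrt : ∀ y, 0 ≤ y → σ (Real.sqrt y) = v (y / M) := by
    intro y hy
    simp [hσ_def, Real.sq_sqrt hy]
  refine ⟨F, σ, M⁻¹, hF_cont.continuousOn, hF_mono.strictMonoOn _, hF_nonneg, ?_, hF0,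
    hF_top, ?_, ?_, ?_, ?_, ?_, inv_pos.2 hM0, ?_, ?_⟩
  · -- F dominates f
    intro z hz
    have hkey2 : Φ (f z) ≤ z := by
      rcases eq_or_lt_of_le hz with h | h
      · rw [← h, hf0, hΦ0]
      · have hfz : 0 ≤ f z := hfnn z h.le
        rcases eq_or_lt_of_le hfz with h0 | h0
        · rw [← h0, hΦ0]; exact h.le
        · rw [hΦ_eq _ hfz]
          have h1 : v (f z / M) ≤ z / f z := by
            refine le_trans (hv_ub _) ?_
            calc u (f z / M) = (g (f z / M))⁻¹ := rfl
              _ ≤ (f z / z)⁻¹ := inv_anti₀ (div_pos h0 h) (hkey z h)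
              _ = z / f z := by rw [inv_div]
          calc v (f z / M) * f z ≤ z / f z * f z :=
                mul_le_mul_of_nonneg_right h1 hfz
            _ = z := div_mul_cancel₀ z h0.ne'
    calc f z = F (Φ (f z)) := (hFΦ _).symm
      _ ≤ F z := hF_mono.monotone hkey2
  · -- sublinearity
    have htd : Tendsto (fun z => (v (F z / M))⁻¹) atTop (𝓝 0) :=
      tendsto_inv_atTop_zero.comp (hv_tendsTop.comp (hF_top.atTop_div_const hM0))
    refine Tendsto.limsup_eq (htd.congr' ?_)
    filter_upwards [eventually_gt_atTop (0:ℝ)] with z hz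
    have hFz : 0 < F z := by
      rw [← hF0]; exact hF_mono hz
    have hzeq : z = v (F z / M) * F z := by
      conv_lhs => rw [← hΦF z]
      rw [hΦ_eq _ hFz.le]
    show (v (F z / M))⁻¹ = F z / z
    nth_rewrite 3 [hzeq]
    rw [eq_div_iff (mul_pos (hv_pos _) hFz).ne']
    rw [inv_mul_cancel_left₀ (hv_pos _).ne']
  · -- continuity of σ
    exact (hv_cont.comp ((continuous_pow 2).div_const M)).continuousOn
  · -- σ nonneg
    intro s _
    exact (hv_pos _).le
  · -- inverse representation
    intro y hy
    rw [hσ_sqrt y hy, ← hΦ_eq y hy, hFΦ]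
  · -- monotonicity of y ↦ σ(√y)
    intro y₁ hy₁ y₂ hy₂ h
    show σ (Real.sqrt y₁) ≤ σ (Real.sqrt y₂)
    rw [hσ_sqrt y₁ hy₁, hσ_sqrt y₂ hy₂]
    exact hv_mono ((div_le_div_iff_of_pos_right hM0).mpr h)
  · -- lower bound
    intro y hy
    show M⁻¹ ≤ σ (Real.sqrt y)
    rw [hσ_sqrt y hy]
    exact hv_lb' _
  · -- σ(√y) → ∞
    have : Tendsto (fun y : ℝ => v (y / M)) atTop atTop :=
      hv_tendsTop.comp (tendsto_id.atTop_div_const hM0)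
    refine this.congr' ?_
    filter_upwards [eventually_ge_atTop (0:ℝ)] with y hy
    show v (y / M) = σ (Real.sqrt y)
    rw [hσ_sqrt y hy]
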